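/- For every finitely branching interpretation I, the L_Φ-equivalence relation ≡_{Φ,I} on Δ^I (x ≡ x' iff x and x' satisfy the same L_Φ-concepts) coincides with the largest L_Φ-auto-bisimulation ∼_{Φ,I} of I. -/

import Mathlib

/-- A set of DL-features (subset of {I, O, Q, U, Self}). -/
structure DLFeat where
  hasI : Bool
  hasO : Bool
  hasQ : Bool
  hasU : Bool
  hasSelf : Bool

/-- An interpretation with concept names `CN`, role names `RN`, individual names `IN`
and domain `D`. -/
structure Interp (CN RN IN : Type) (D : Type) where
  cInt : CN → Set D
  rInt : RN → D → D → Prop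
  iInt : IN → D

/-- Interpretation of a basic role: a role name, possibly inverted. -/
def brInt {CN RN IN D : Type} (I : Interp CN RN IN D) (R : RN × Bool) (x y : D) : Prop :=
  if R.2 then I.rInt R.1 y x else I.rInt R.1 x y

mutual
/-- Concepts of the full language (membership in `L_Φ` is a separate predicate). -/
inductive DLConcept (CN RN IN : Type) : Type where
  | atom (A : CN)
  | top
  | bot
  | neg (C : DLConcept CN RN IN)
  | conj (C D : DLConcept CN RN IN)
  | disj (C D : DLConcept CN RN IN)
  | all (R : DLRole CN RN IN) (C : DLConcept CN RN IN)
  | ex (R : DLRole CN RN IN) (C : DLConcept CN RN IN)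
  | nom (a : IN)
  | atLeast (n : ℕ) (r : RN) (inverted : Bool) (C : DLConcept CN RN IN)
  | atMost (n : ℕ) (r : RN) (inverted : Bool) (C : DLConcept CN RN IN)
  | exSelf (r : RN)
/-- Roles of the full language. -/
inductive DLRole (CN RN IN : Type) : Type where
  | name (r : RN)
  | eps
  | comp (R S : DLRole CN RN IN)
  | runion (R S : DLRole CN RN IN)
  | star (R : DLRole CN RN IN)
  | test (C : DLConcept CN RN IN)
  | inv (r : RN)
  | univ
end

mutual
/-- The concept belongs to the language `L_Φ`. -/
def DLConcept.inL {CN RN IN : Type} (Φ : DLFeat) : DLConcept CN RN IN → Prop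
  | .atom _ => True
  | .top => True
  | .bot => True
  | .neg C => C.inL Φ
  | .conj C D => C.inL Φ ∧ D.inL Φ
  | .disj C D => C.inL Φ ∧ D.inL Φ
  | .all R C => R.inL Φ ∧ C.inL Φ
  | .ex R C => R.inL Φ ∧ C.inL Φ
  | .nom _ => Φ.hasO = true
  | .atLeast _ _ b C => Φ.hasQ = true ∧ (b = true → Φ.hasI = true) ∧ C.inL Φ
  | .atMost _ _ b C => Φ.hasQ = true ∧ (b = true → Φ.hasI = true) ∧ C.inL Φ
  | .exSelf _ => Φ.hasSelf = true
/-- The role belongs to the language `L_Φ`. -/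
def DLRole.inL {CN RN IN : Type} (Φ : DLFeat) : DLRole CN RN IN → Prop
  | .name _ => True
  | .eps => True
  | .comp R S => R.inL Φ ∧ S.inL Φ
  | .runion R S => R.inL Φ ∧ S.inL Φ
  | .star R => R.inL Φ
  | .test C => C.inL Φ
  | .inv _ => Φ.hasI = true
  | .univ => Φ.hasU = true
end

mutual
/-- Semantics of concepts. -/
def DLConcept.sem {CN RN IN D : Type} (I : Interp CN RN IN D) : DLConcept CN RN IN → Set D
  | .atom A => I.cInt A
  | .top => Set.univ
  | .bot => ∅
  | .neg C => (DLConcept.sem I C)ᶜ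
  | .conj C C' => DLConcept.sem I C ∩ DLConcept.sem I C'
  | .disj C C' => DLConcept.sem I C ∪ DLConcept.sem I C'
  | .all R C => {x | ∀ y, DLRole.sem I R x y → y ∈ DLConcept.sem I C}
  | .ex R C => {x | ∃ y, DLRole.sem I R x y ∧ y ∈ DLConcept.sem I C}
  | .nom a => {I.iInt a}
  | .atLeast n r b C =>
      {x | (n : Cardinal) ≤ Cardinal.mk {y // brInt I (r, b) x y ∧ y ∈ DLConcept.sem I C}}
  | .atMost n r b C =>
      {x | Cardinal.mk {y // brInt I (r, b) x y ∧ y ∈ DLConcept.sem I C} ≤ (n : Cardinal)}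
  | .exSelf r => {x | I.rInt r x x}
/-- Semantics of roles. -/
def DLRole.sem {CN RN IN D : Type} (I : Interp CN RN IN D) : DLRole CN RN IN → D → D → Prop
  | .name r => I.rInt r
  | .eps => Eq
  | .comp R S => Relation.Comp (DLRole.sem I R) (DLRole.sem I S)
  | .runion R S => fun x y => DLRole.sem I R x y ∨ DLRole.sem I S x y
  | .star R => Relation.ReflTransGen (DLRole.sem I R)
  | .test C => fun x y => x = y ∧ x ∈ DLConcept.sem I C
  | .inv r => fun x y => I.rInt r y x
  | .univ => fun _ _ => True
end

/-- `Z` is an `L_Φ`-bisimulation between `I` and `I'`. -/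
def Bisim {CN RN IN D D' : Type} (Φ : DLFeat) (I : Interp CN RN IN D)
    (I' : Interp CN RN IN D') (Z : D → D' → Prop) : Prop :=
  (∀ a : IN, Z (I.iInt a) (I'.iInt a)) ∧
  (∀ (A : CN) x x', Z x x' → (x ∈ I.cInt A ↔ x' ∈ I'.cInt A)) ∧
  (∀ (r : RN) x x' y, Z x x' → I.rInt r x y → ∃ y', Z y y' ∧ I'.rInt r x' y') ∧
  (∀ (r : RN) x x' y', Z x x' → I'.rInt r x' y' → ∃ y, Z y y' ∧ I.rInt r x y) ∧
  (Φ.hasI = true →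
    (∀ (r : RN) x x' y, Z x x' → I.rInt r y x → ∃ y', Z y y' ∧ I'.rInt r y' x') ∧
    (∀ (r : RN) x x' y', Z x x' → I'.rInt r y' x' → ∃ y, Z y y' ∧ I.rInt r y x)) ∧
  (Φ.hasO = true → ∀ (a : IN) x x', Z x x' → (x = I.iInt a ↔ x' = I'.iInt a)) ∧
  (Φ.hasQ = true → ∀ (r : RN) x x', Z x x' →
    ∃ h : {y // I.rInt r x y} ≃ {y' // I'.rInt r x' y'}, ∀ y, Z y.1 (h y).1) ∧
  (Φ.hasQ = true → Φ.hasI = true → ∀ (r : RN) x x', Z x x' →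
    ∃ h : {y // I.rInt r y x} ≃ {y' // I'.rInt r y' x'}, ∀ y, Z y.1 (h y).1) ∧
  (Φ.hasU = true → (∀ x, ∃ x', Z x x') ∧ (∀ x', ∃ x, Z x x')) ∧
  (Φ.hasSelf = true → ∀ (r : RN) x x', Z x x' → (I.rInt r x x ↔ I'.rInt r x' x'))

/-- One step along a basic role (role name, or inverse of a role name if `I ∈ Φ`). -/
def basicStep {CN RN IN D : Type} (Φ : DLFeat) (I : Interp CN RN IN D) (x y : D) : Prop :=
  ∃ r : RN, I.rInt r x y ∨ (Φ.hasI = true ∧ I.rInt r y x)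

/-- `I` is unreachable-objects-free: every element is reachable from some named
individual via a finite path of basic-role edges. -/
def UOF {CN RN IN D : Type} (Φ : DLFeat) (I : Interp CN RN IN D) : Prop :=
  ∀ x : D, ∃ a : IN, Relation.ReflTransGen (basicStep Φ I) (I.iInt a) x

/-- `I` validates the GCI `C ⊑ C'`. -/
def satGCI {CN RN IN D : Type} (I : Interp CN RN IN D) (C C' : DLConcept CN RN IN) : Prop :=
  DLConcept.sem I C ⊆ DLConcept.sem I C'

/-- `I` is a model of the TBox `T`. -/
def modelsTBox {CN RN IN D : Type} (I : Interp CN RN IN D)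
    (T : Set (DLConcept CN RN IN × DLConcept CN RN IN)) : Prop :=
  ∀ p ∈ T, satGCI I p.1 p.2

/-- Individual assertions. -/
inductive Assertion (CN RN IN : Type) : Type where
  | conc (C : DLConcept CN RN IN) (a : IN)
  | rolePos (R : DLRole CN RN IN) (a b : IN)
  | roleNeg (R : DLRole CN RN IN) (a b : IN)
  | eq (a b : IN)
  | neq (a b : IN)

/-- The assertion belongs to `L_Φ`. -/
def Assertion.inL {CN RN IN : Type} (Φ : DLFeat) : Assertion CN RN IN → Prop
  | .conc C _ => C.inL Φ
  | .rolePos R _ _ => R.inL Φ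
  | .roleNeg R _ _ => R.inL Φ
  | .eq _ _ => True
  | .neq _ _ => True

/-- `I` satisfies the individual assertion. -/
def Assertion.sat {CN RN IN D : Type} (I : Interp CN RN IN D) : Assertion CN RN IN → Prop
  | .conc C a => I.iInt a ∈ DLConcept.sem I C
  | .rolePos R a b => DLRole.sem I R (I.iInt a) (I.iInt b)
  | .roleNeg R a b => ¬ DLRole.sem I R (I.iInt a) (I.iInt b)
  | .eq a b => I.iInt a = I.iInt b
  | .neq a b => I.iInt a ≠ I.iInt b

/-- `I` is a model of the ABox `A`. -/
def modelsABox {CN RN IN D : Type} (I : Interp CN RN IN D) (A : Set (Assertion CN RN IN)) : Prop :=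
  ∀ φ ∈ A, φ.sat I

/-- A role axiom `R₁ ∘ … ∘ R_k ⊑ r` (`ε ⊑ r` when the list is empty), the `R_i` basic roles. -/
structure RoleAx (RN : Type) where
  lhs : List (RN × Bool)
  rhs : RN

/-- The role axiom is in `L_Φ` (inverse basic roles only if `I ∈ Φ`). -/
def RoleAx.inL {RN : Type} (Φ : DLFeat) (ax : RoleAx RN) : Prop :=
  ∀ p ∈ ax.lhs, p.2 = true → Φ.hasI = true

/-- Interpretation of a composition chain of basic roles (`ε` for the empty chain). -/
def chainInt {CN RN IN D : Type} (I : Interp CN RN IN D) : List (RN × Bool) → D → D → Prop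
  | [] => Eq
  | R :: l => fun x z => ∃ y, brInt I R x y ∧ chainInt I l y z

/-- `I` validates the role axiom. -/
def satRoleAx {CN RN IN D : Type} (I : Interp CN RN IN D) (ax : RoleAx RN) : Prop :=
  ∀ x y, chainInt I ax.lhs x y → I.rInt ax.rhs x y

/-- `I` is a model of the RBox `R`. -/
def modelsRBox {CN RN IN D : Type} (I : Interp CN RN IN D) (R : Set (RoleAx RN)) : Prop :=
  ∀ ax ∈ R, satRoleAx I ax

/-- `I'` is an r-extension of `I`. -/
def RExt {CN RN IN D : Type} (I I' : Interp CN RN IN D) : Prop :=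
  I'.cInt = I.cInt ∧ I'.iInt = I.iInt ∧ ∀ (r : RN) x y, I.rInt r x y → I'.rInt r x y

/-- `I'` is the least r-extension of `I` validating the RBox `R`. -/
def LeastRExt {CN RN IN D : Type} (I : Interp CN RN IN D) (R : Set (RoleAx RN))
    (I' : Interp CN RN IN D) : Prop :=
  RExt I I' ∧ modelsRBox I' R ∧
    ∀ I'' : Interp CN RN IN D, RExt I I'' → modelsRBox I'' R →
      ∀ (r : RN) x y, I'.rInt r x y → I''.rInt r x y

/-- `I` is finitely branching w.r.t. `L_Φ`. -/
def FinBranch {CN RN IN D : Type} (Φ : DLFeat) (I : Interp CN RN IN D) : Prop :=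
  ∀ (r : RN) (x : D), {y | I.rInt r x y}.Finite ∧ (Φ.hasI = true → {y | I.rInt r y x}.Finite)

/-- `x` and `x'` are `L_Φ`-equivalent: they satisfy the same concepts of `L_Φ`. -/
def LEquiv {CN RN IN D D' : Type} (Φ : DLFeat) (I : Interp CN RN IN D)
    (I' : Interp CN RN IN D') (x : D) (x' : D') : Prop :=
  ∀ C : DLConcept CN RN IN, C.inL Φ → (x ∈ DLConcept.sem I C ↔ x' ∈ DLConcept.sem I' C)

/-- The largest `L_Φ`-auto-bisimulation of `I` (union of all auto-bisimulations). -/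
def gbisim {CN RN IN D : Type} (Φ : DLFeat) (I : Interp CN RN IN D) (x y : D) : Prop :=
  ∃ Z, Bisim Φ I I Z ∧ Z x y

/-- The quotient interpretation of `I` w.r.t. the largest `L_Φ`-auto-bisimulation. -/
def quotInterp {CN RN IN D : Type} (Φ : DLFeat) (I : Interp CN RN IN D) :
    Interp CN RN IN (Quot (gbisim Φ I)) where
  cInt A := {q | ∃ x, Quot.mk _ x = q ∧ x ∈ I.cInt A}
  rInt r q q' := ∃ x y, Quot.mk _ x = q ∧ Quot.mk _ y = q' ∧ I.rInt r x y
  iInt a := Quot.mk _ (I.iInt a)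

/-- A QS-interpretation: an interpretation together with multiplicity functions for
basic roles and self-loop sets for role names. -/
structure QSInterp (CN RN IN D : Type) where
  toInterp : Interp CN RN IN D
  QU : (RN × Bool) → D → D → ℕ
  SE : RN → Set D

/-- The defining positivity condition of QS-interpretations:
`QU R x y > 0` iff `R` connects `x` to `y`. -/
def QSInterp.Proper {CN RN IN D : Type} (J : QSInterp CN RN IN D) : Prop :=
  ∀ (R : RN × Bool) x y, 0 < J.QU R x y ↔ brInt J.toInterp R x y

/-- `Σ {f y : y ∈ S}` as an extended natural number. -/
noncomputable def qsum {D : Type} (f : D → ℕ) (S : Set D) : ℕ∞ :=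
  ⨆ (s : Finset D) (_ : ↑s ⊆ S), (∑ y ∈ s, f y : ℕ∞)

mutual
/-- Semantics of concepts in a QS-interpretation. -/
noncomputable def DLConcept.qsem {CN RN IN D : Type} (J : QSInterp CN RN IN D) :
    DLConcept CN RN IN → Set D
  | .atom A => J.toInterp.cInt A
  | .top => Set.univ
  | .bot => ∅
  | .neg C => (DLConcept.qsem J C)ᶜ
  | .conj C C' => DLConcept.qsem J C ∩ DLConcept.qsem J C'
  | .disj C C' => DLConcept.qsem J C ∪ DLConcept.qsem J C'
  | .all R C => {x | ∀ y, DLRole.qsem J R x y → y ∈ DLConcept.qsem J C}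
  | .ex R C => {x | ∃ y, DLRole.qsem J R x y ∧ y ∈ DLConcept.qsem J C}
  | .nom a => {J.toInterp.iInt a}
  | .atLeast n r b C => {x | (n : ℕ∞) ≤ qsum (J.QU (r, b) x) (DLConcept.qsem J C)}
  | .atMost n r b C => {x | qsum (J.QU (r, b) x) (DLConcept.qsem J C) ≤ (n : ℕ∞)}
  | .exSelf r => J.SE r
/-- Semantics of roles in a QS-interpretation. -/
noncomputable def DLRole.qsem {CN RN IN D : Type} (J : QSInterp CN RN IN D) :
    DLRole CN RN IN → D → D → Prop
  | .name r => J.toInterp.rInt r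
  | .eps => Eq
  | .comp R S => Relation.Comp (DLRole.qsem J R) (DLRole.qsem J S)
  | .runion R S => fun x y => DLRole.qsem J R x y ∨ DLRole.qsem J S x y
  | .star R => Relation.ReflTransGen (DLRole.qsem J R)
  | .test C => fun x y => x = y ∧ x ∈ DLConcept.qsem J C
  | .inv r => fun x y => J.toInterp.rInt r y x
  | .univ => fun _ _ => True
end

/-- The quotient QS-interpretation of a traditional interpretation `I` w.r.t. the
largest `L_Φ`-auto-bisimulation. -/
noncomputable def qsQuot {CN RN IN D : Type} (Φ : DLFeat) (I : Interp CN RN IN D) :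
    QSInterp CN RN IN (Quot (gbisim Φ I)) where
  toInterp := quotInterp Φ I
  QU R q q' := sSup {n | ∃ x, Quot.mk _ x = q ∧
    n = Set.ncard {y | Quot.mk (gbisim Φ I) y = q' ∧ brInt I R x y}}
  SE r := {q | ∃ x, Quot.mk _ x = q ∧ I.rInt r x x}

/-! ### Auxiliary development for Statement 13 -/

section HMAux

variable {CN RN IN D : Type} {Φ : DLFeat} {I : Interp CN RN IN D}

theorem lequiv_refl (x : D) : LEquiv Φ I I x x := fun _ _ => Iff.rfl

theorem lequiv_symm {x y : D} (h : LEquiv Φ I I x y) : LEquiv Φ I I y x :=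
  fun C hC => (h C hC).symm

theorem lequiv_trans {x y z : D} (h : LEquiv Φ I I x y) (h' : LEquiv Φ I I y z) :
    LEquiv Φ I I x z := fun C hC => (h C hC).trans (h' C hC)

theorem lequiv_equivalence : Equivalence (LEquiv Φ I I) :=
  ⟨lequiv_refl, lequiv_symm, lequiv_trans⟩

theorem quot_lequiv_eq {x y : D} :
    Quot.mk (LEquiv Φ I I) x = Quot.mk (LEquiv Φ I I) y ↔ LEquiv Φ I I x y :=
  Quot.eq.trans lequiv_equivalence.eqvGen_iff

theorem lequiv_distinguish {x y : D} (h : ¬ LEquiv Φ I I x y) :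
    ∃ C : DLConcept CN RN IN, C.inL Φ ∧ x ∈ DLConcept.sem I C ∧ y ∉ DLConcept.sem I C := by
  simp only [LEquiv, not_forall] at h
  obtain ⟨C, hC, hne⟩ := h
  by_cases hx : x ∈ DLConcept.sem I C
  · have hy : y ∉ DLConcept.sem I C := fun hy => hne ⟨fun _ => hy, fun _ => hx⟩
    exact ⟨C, hC, hx, hy⟩
  · have hy : y ∈ DLConcept.sem I C := by
      by_contra hy
      exact hne ⟨fun h' => absurd h' hx, fun h' => absurd h' hy⟩
    refine ⟨.neg C, hC, ?_, ?_⟩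
    · simpa [DLConcept.sem] using hx
    · simp [DLConcept.sem, hy]

/-- Finite conjunction of a list of concepts. -/
def bigConj : List (DLConcept CN RN IN) → DLConcept CN RN IN
  | [] => .top
  | C :: l => .conj C (bigConj l)

theorem bigConj_inL {l : List (DLConcept CN RN IN)} (h : ∀ C ∈ l, C.inL Φ) :
    (bigConj l).inL Φ := by
  induction l with
  | nil => simp [bigConj, DLConcept.inL]
  | cons C l ih =>
      simp only [bigConj, DLConcept.inL]
      exact ⟨h C List.mem_cons_self, ih fun C' hC' => h C' (List.mem_cons_of_mem _ hC')⟩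

theorem mem_bigConj {l : List (DLConcept CN RN IN)} {x : D} :
    x ∈ DLConcept.sem I (bigConj l) ↔ ∀ C ∈ l, x ∈ DLConcept.sem I C := by
  induction l with
  | nil => simp [bigConj, DLConcept.sem]
  | cons C l ih => simp [bigConj, DLConcept.sem, ih]

/-- A characteristic concept for the `≡`-class of `y` relative to a finite set `S`. -/
theorem charConcept {S : Set D} (hS : S.Finite) (y : D) :
    ∃ C : DLConcept CN RN IN, C.inL Φ ∧ y ∈ DLConcept.sem I C ∧
      ∀ z ∈ S, (z ∈ DLConcept.sem I C ↔ LEquiv Φ I I y z) := by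
  classical
  let f : D → DLConcept CN RN IN := fun z =>
    if h : LEquiv Φ I I y z then .top else (lequiv_distinguish h).choose
  have hfL : ∀ z, (f z).inL Φ := by
    intro z
    by_cases h : LEquiv Φ I I y z
    · simp only [f, dif_pos h]
      simp [DLConcept.inL]
    · simp only [f, dif_neg h]
      exact (lequiv_distinguish h).choose_spec.1
  have hfy : ∀ z, y ∈ DLConcept.sem I (f z) := by
    intro z
    by_cases h : LEquiv Φ I I y z
    · simp only [f, dif_pos h]
      simp [DLConcept.sem]
    · simp only [f, dif_neg h]
      exact (lequiv_distinguish h).choose_spec.2.1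
  have hfz : ∀ z, ¬ LEquiv Φ I I y z → z ∉ DLConcept.sem I (f z) := by
    intro z h
    simp only [f, dif_neg h]
    exact (lequiv_distinguish h).choose_spec.2.2
  have hL : (bigConj (hS.toFinset.toList.map f)).inL Φ := by
    refine bigConj_inL ?_
    intro C hC
    obtain ⟨z, _, rfl⟩ := List.mem_map.mp hC
    exact hfL z
  have hyC : y ∈ DLConcept.sem I (bigConj (hS.toFinset.toList.map f)) := by
    refine mem_bigConj.mpr ?_
    intro C hC
    obtain ⟨z, _, rfl⟩ := List.mem_map.mp hC
    exact hfy z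
  refine ⟨bigConj (hS.toFinset.toList.map f), hL, hyC, ?_⟩
  · intro z hz
    constructor
    · intro hmem
      by_contra hne
      have hfzl : f z ∈ hS.toFinset.toList.map f :=
        List.mem_map.mpr ⟨z, by simp [hS.mem_toFinset, hz], rfl⟩
      exact hfz z hne (mem_bigConj.mp hmem _ hfzl)
    · intro heq
      exact (heq _ hL).mp hyC

/-- The role expression denoting a basic role. -/
def brRole (R : RN × Bool) : DLRole CN RN IN :=
  if R.2 then .inv R.1 else .name R.1

theorem brRole_sem {R : RN × Bool} {x y : D} :
    DLRole.sem I (brRole (CN := CN) (IN := IN) R) x y ↔ brInt I R x y := by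
  obtain ⟨r, b⟩ := R
  cases b <;> simp [brRole, DLRole.sem, brInt]

theorem brRole_inL {R : RN × Bool} (h : R.2 = true → Φ.hasI = true) :
    (brRole (CN := CN) (IN := IN) R).inL Φ := by
  obtain ⟨r, b⟩ := R
  cases b
  · simp [brRole, DLRole.inL]
  · simpa [brRole, DLRole.inL] using h rfl

theorem brFin (hfb : FinBranch Φ I) {r : RN} {b : Bool} (hb : b = true → Φ.hasI = true)
    (x : D) : {w | brInt I (r, b) x w}.Finite := by
  cases b
  · exact (hfb r x).1
  · exact (hfb r x).2 (hb rfl)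

/-- Hennessy–Milner forth property for basic roles. -/
theorem hm_forth (hfb : FinBranch Φ I) {x x' y : D} (hxe : LEquiv Φ I I x x') {r : RN}
    {b : Bool} (hb : b = true → Φ.hasI = true) (hr : brInt I (r, b) x y) :
    ∃ y', LEquiv Φ I I y y' ∧ brInt I (r, b) x' y' := by
  obtain ⟨C, hCL, hyC, hiff⟩ :=
    charConcept (Φ := Φ) (I := I) (brFin hfb hb x') y
  have hx : x ∈ DLConcept.sem I (.ex (brRole (r, b)) C) :=
    ⟨y, brRole_sem.mpr hr, hyC⟩
  have hexL : (DLConcept.ex (brRole (r, b)) C).inL Φ := ⟨brRole_inL hb, hCL⟩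
  have hx' : x' ∈ DLConcept.sem I (.ex (brRole (r, b)) C) :=
    (hxe _ hexL).mp hx
  obtain ⟨y', hR, hy'C⟩ := hx'
  have hbr : brInt I (r, b) x' y' := brRole_sem.mp hR
  exact ⟨y', (hiff y' hbr).mp hy'C, hbr⟩

/-- The number of basic-role successors in each `≡`-class is an `≡`-invariant. -/
theorem hm_count (hfb : FinBranch Φ I) (hQ : Φ.hasQ = true) {r : RN} {b : Bool}
    (hb : b = true → Φ.hasI = true) {x x' : D} (hxe : LEquiv Φ I I x x')
    (q : Quot (LEquiv Φ I I)) :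
    Nat.card {w // brInt I (r, b) x w ∧ Quot.mk (LEquiv Φ I I) w = q}
      = Nat.card {w // brInt I (r, b) x' w ∧ Quot.mk (LEquiv Φ I I) w = q} := by
  classical
  obtain ⟨y, rfl⟩ := Quot.exists_rep q
  have hSfin : ({w | brInt I (r, b) x w} ∪ {w | brInt I (r, b) x' w}).Finite :=
    (brFin hfb hb x).union (brFin hfb hb x')
  obtain ⟨C, hCL, _, hiff⟩ := charConcept (Φ := Φ) (I := I) hSfin y
  -- replace the quotient condition by membership in C
  have key : ∀ u : D, (∀ w, brInt I (r, b) u w → w ∈ ({w | brInt I (r, b) x w} ∪ {w | brInt I (r, b) x' w})) →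
      Nat.card {w // brInt I (r, b) u w ∧ Quot.mk (LEquiv Φ I I) w = Quot.mk _ y}
        = Nat.card {w // brInt I (r, b) u w ∧ w ∈ DLConcept.sem I C} := by
    intro u hu
    refine Nat.card_congr (Equiv.subtypeEquivRight fun w => ?_)
    constructor
    · rintro ⟨h1, h2⟩
      exact ⟨h1, (hiff w (hu w h1)).mpr (quot_lequiv_eq.mp h2.symm)⟩
    · rintro ⟨h1, h2⟩
      exact ⟨h1, (quot_lequiv_eq.mpr ((hiff w (hu w h1)).mp h2)).symm⟩
  have hx := key x (fun w hw => Or.inl hw)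
  have hx' := key x' (fun w hw => Or.inr hw)
  rw [hx, hx']
  -- now compare the counts via atLeast/atMost concepts
  have hTxfin : {w | brInt I (r, b) x w ∧ w ∈ DLConcept.sem I C}.Finite :=
    (brFin hfb hb x).subset fun w hw => hw.1
  have hTx'fin : {w | brInt I (r, b) x' w ∧ w ∈ DLConcept.sem I C}.Finite :=
    (brFin hfb hb x').subset fun w hw => hw.1
  haveI : Fintype {w // brInt I (r, b) x w ∧ w ∈ DLConcept.sem I C} := hTxfin.fintype
  haveI : Fintype {w // brInt I (r, b) x' w ∧ w ∈ DLConcept.sem I C} := hTx'fin.fintype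
  set n : ℕ := Nat.card {w // brInt I (r, b) x w ∧ w ∈ DLConcept.sem I C} with hn
  have hcardx : Cardinal.mk {w // brInt I (r, b) x w ∧ w ∈ DLConcept.sem I C} = (n : Cardinal) := by
    rw [Cardinal.mk_fintype, hn, Nat.card_eq_fintype_card]
  have hxL : x ∈ DLConcept.sem I (.atLeast n r b C) := by
    show (n : Cardinal) ≤ Cardinal.mk {w // brInt I (r, b) x w ∧ w ∈ DLConcept.sem I C}
    rw [hcardx]
  have hxM : x ∈ DLConcept.sem I (.atMost n r b C) := by
    show Cardinal.mk {w // brInt I (r, b) x w ∧ w ∈ DLConcept.sem I C} ≤ (n : Cardinal)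
    rw [hcardx]
  have hinL : (DLConcept.atLeast (CN := CN) (RN := RN) (IN := IN) n r b C).inL Φ ∧
      (DLConcept.atMost (CN := CN) (RN := RN) (IN := IN) n r b C).inL Φ :=
    ⟨⟨hQ, hb, hCL⟩, ⟨hQ, hb, hCL⟩⟩
  have hx'L : (n : Cardinal) ≤
      Cardinal.mk {w // brInt I (r, b) x' w ∧ w ∈ DLConcept.sem I C} :=
    (hxe _ hinL.1).mp hxL
  have hx'M : Cardinal.mk {w // brInt I (r, b) x' w ∧ w ∈ DLConcept.sem I C}
      ≤ (n : Cardinal) := (hxe _ hinL.2).mp hxM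
  have hcardx' : Cardinal.mk {w // brInt I (r, b) x' w ∧ w ∈ DLConcept.sem I C}
      = (n : Cardinal) := le_antisymm hx'M hx'L
  rw [Cardinal.mk_fintype] at hcardx'
  have := Nat.cast_injective hcardx'
  rw [Nat.card_eq_fintype_card, this]

/-- Hennessy–Milner: a `Z`-preserving bijection between basic-role successor sets. -/
theorem hm_equiv (hfb : FinBranch Φ I) (hQ : Φ.hasQ = true) {r : RN} {b : Bool}
    (hb : b = true → Φ.hasI = true) {x x' : D} (hxe : LEquiv Φ I I x x') :
    ∃ h : {w // brInt I (r, b) x w} ≃ {w // brInt I (r, b) x' w},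
      ∀ w, LEquiv Φ I I w.1 (h w).1 := by
  classical
  haveI : Finite {w // brInt I (r, b) x w} := (brFin hfb hb x).to_subtype
  haveI : Finite {w // brInt I (r, b) x' w} := (brFin hfb hb x').to_subtype
  have hfib : ∀ q : Quot (LEquiv Φ I I),
      Nonempty ({w : {w // brInt I (r, b) x w} // Quot.mk (LEquiv Φ I I) w.1 = q}
        ≃ {w : {w // brInt I (r, b) x' w} // Quot.mk (LEquiv Φ I I) w.1 = q}) := by
    intro q
    haveI := Fintype.ofFinite {w : {w // brInt I (r, b) x w} // Quot.mk (LEquiv Φ I I) w.1 = q}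
    haveI := Fintype.ofFinite {w : {w // brInt I (r, b) x' w} // Quot.mk (LEquiv Φ I I) w.1 = q}
    refine ⟨Fintype.equivOfCardEq ?_⟩
    have e1 := Equiv.subtypeSubtypeEquivSubtypeInter (fun w => brInt I (r, b) x w)
      (fun w => Quot.mk (LEquiv Φ I I) w = q)
    have e2 := Equiv.subtypeSubtypeEquivSubtypeInter (fun w => brInt I (r, b) x' w)
      (fun w => Quot.mk (LEquiv Φ I I) w = q)
    rw [← Nat.card_eq_fintype_card, ← Nat.card_eq_fintype_card,
      Nat.card_congr e1, Nat.card_congr e2]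
    exact hm_count hfb hQ hb hxe q
  refine ⟨Equiv.ofFiberEquiv (fun q => (hfib q).some), fun w => ?_⟩
  have := Equiv.ofFiberEquiv_map (fun q => (hfib q).some) w
  exact quot_lequiv_eq.mp this.symm

end HMAux

section Invariance

/-- Projections of a bisimulation, for convenience. -/
theorem Bisim.c1 {CN RN IN D D' : Type} {Φ : DLFeat} {I : Interp CN RN IN D}
    {I' : Interp CN RN IN D'} {Z : D → D' → Prop} (h : Bisim Φ I I' Z) :
    ∀ a : IN, Z (I.iInt a) (I'.iInt a) := h.1

mutual
/-- Invariance of `L_Φ`-concepts under `L_Φ`-bisimulations. -/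
theorem concept_inv {CN RN IN D D' : Type} {Φ : DLFeat} {I : Interp CN RN IN D}
    {I' : Interp CN RN IN D'} {Z : D → D' → Prop} (hZ : Bisim Φ I I' Z) :
    ∀ C : DLConcept CN RN IN, C.inL Φ → ∀ x x', Z x x' →
      (x ∈ DLConcept.sem I C ↔ x' ∈ DLConcept.sem I' C)
  | .atom A, _, x, x', hxx' => hZ.2.1 A x x' hxx'
  | .top, _, x, x', _ => by simp [DLConcept.sem]
  | .bot, _, x, x', _ => by simp [DLConcept.sem]
  | .neg C, hC, x, x', hxx' => not_congr (concept_inv hZ C hC x x' hxx')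
  | .conj C C', hC, x, x', hxx' =>
      and_congr (concept_inv hZ C hC.1 x x' hxx') (concept_inv hZ C' hC.2 x x' hxx')
  | .disj C C', hC, x, x', hxx' =>
      or_congr (concept_inv hZ C hC.1 x x' hxx') (concept_inv hZ C' hC.2 x x' hxx')
  | .all R C, hC, x, x', hxx' => by
      constructor
      · intro hx y' hR'
        obtain ⟨y, hZy, hRy⟩ := (role_inv hZ R hC.1).2 x x' y' hxx' hR'
        exact (concept_inv hZ C hC.2 y y' hZy).mp (hx y hRy)
      · intro hx' y hRy
        obtain ⟨y', hZy, hR'⟩ := (role_inv hZ R hC.1).1 x x' y hxx' hRy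
        exact (concept_inv hZ C hC.2 y y' hZy).mpr (hx' y' hR')
  | .ex R C, hC, x, x', hxx' => by
      constructor
      · rintro ⟨y, hRy, hyC⟩
        obtain ⟨y', hZy, hR'⟩ := (role_inv hZ R hC.1).1 x x' y hxx' hRy
        exact ⟨y', hR', (concept_inv hZ C hC.2 y y' hZy).mp hyC⟩
      · rintro ⟨y', hR', hy'C⟩
        obtain ⟨y, hZy, hRy⟩ := (role_inv hZ R hC.1).2 x x' y' hxx' hR'
        exact ⟨y, hRy, (concept_inv hZ C hC.2 y y' hZy).mpr hy'C⟩
  | .nom a, hO, x, x', hxx' => by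
      have := hZ.2.2.2.2.2.1 hO a x x' hxx'
      simpa [DLConcept.sem] using this
  | .atLeast n r false C, hC, x, x', hxx' => by
      obtain ⟨h, hh⟩ := hZ.2.2.2.2.2.2.1 hC.1 r x x' hxx'
      have e : {y // brInt I (r, false) x y ∧ y ∈ DLConcept.sem I C}
          ≃ {y' // brInt I' (r, false) x' y' ∧ y' ∈ DLConcept.sem I' C} :=
        (Equiv.subtypeSubtypeEquivSubtypeInter _ _).symm.trans
          ((h.subtypeEquiv fun y => concept_inv hZ C hC.2.2 y.1 (h y).1 (hh y)).trans
            (Equiv.subtypeSubtypeEquivSubtypeInter _ _))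
      show ((n : Cardinal) ≤ Cardinal.mk {y // brInt I (r, false) x y ∧ y ∈ DLConcept.sem I C}) ↔
          ((n : Cardinal) ≤ Cardinal.mk {y' // brInt I' (r, false) x' y' ∧ y' ∈ DLConcept.sem I' C})
      rw [Cardinal.mk_congr e]
  | .atLeast n r true C, hC, x, x', hxx' => by
      obtain ⟨h, hh⟩ := hZ.2.2.2.2.2.2.2.1 hC.1 (hC.2.1 rfl) r x x' hxx'
      have e : {y // brInt I (r, true) x y ∧ y ∈ DLConcept.sem I C}
          ≃ {y' // brInt I' (r, true) x' y' ∧ y' ∈ DLConcept.sem I' C} :=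
        (Equiv.subtypeSubtypeEquivSubtypeInter _ _).symm.trans
          ((h.subtypeEquiv fun y => concept_inv hZ C hC.2.2 y.1 (h y).1 (hh y)).trans
            (Equiv.subtypeSubtypeEquivSubtypeInter _ _))
      show ((n : Cardinal) ≤ Cardinal.mk {y // brInt I (r, true) x y ∧ y ∈ DLConcept.sem I C}) ↔
          ((n : Cardinal) ≤ Cardinal.mk {y' // brInt I' (r, true) x' y' ∧ y' ∈ DLConcept.sem I' C})
      rw [Cardinal.mk_congr e]
  | .atMost n r false C, hC, x, x', hxx' => by
      obtain ⟨h, hh⟩ := hZ.2.2.2.2.2.2.1 hC.1 r x x' hxx'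
      have e : {y // brInt I (r, false) x y ∧ y ∈ DLConcept.sem I C}
          ≃ {y' // brInt I' (r, false) x' y' ∧ y' ∈ DLConcept.sem I' C} :=
        (Equiv.subtypeSubtypeEquivSubtypeInter _ _).symm.trans
          ((h.subtypeEquiv fun y => concept_inv hZ C hC.2.2 y.1 (h y).1 (hh y)).trans
            (Equiv.subtypeSubtypeEquivSubtypeInter _ _))
      show (Cardinal.mk {y // brInt I (r, false) x y ∧ y ∈ DLConcept.sem I C} ≤ (n : Cardinal)) ↔
          (Cardinal.mk {y' // brInt I' (r, false) x' y' ∧ y' ∈ DLConcept.sem I' C} ≤ (n : Cardinal))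
      rw [Cardinal.mk_congr e]
  | .atMost n r true C, hC, x, x', hxx' => by
      obtain ⟨h, hh⟩ := hZ.2.2.2.2.2.2.2.1 hC.1 (hC.2.1 rfl) r x x' hxx'
      have e : {y // brInt I (r, true) x y ∧ y ∈ DLConcept.sem I C}
          ≃ {y' // brInt I' (r, true) x' y' ∧ y' ∈ DLConcept.sem I' C} :=
        (Equiv.subtypeSubtypeEquivSubtypeInter _ _).symm.trans
          ((h.subtypeEquiv fun y => concept_inv hZ C hC.2.2 y.1 (h y).1 (hh y)).trans
            (Equiv.subtypeSubtypeEquivSubtypeInter _ _))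
      show (Cardinal.mk {y // brInt I (r, true) x y ∧ y ∈ DLConcept.sem I C} ≤ (n : Cardinal)) ↔
          (Cardinal.mk {y' // brInt I' (r, true) x' y' ∧ y' ∈ DLConcept.sem I' C} ≤ (n : Cardinal))
      rw [Cardinal.mk_congr e]
  | .exSelf r, hS, x, x', hxx' => hZ.2.2.2.2.2.2.2.2.2 hS r x x' hxx'

/-- Forth and back properties of `L_Φ`-roles under `L_Φ`-bisimulations. -/
theorem role_inv {CN RN IN D D' : Type} {Φ : DLFeat} {I : Interp CN RN IN D}
    {I' : Interp CN RN IN D'} {Z : D → D' → Prop} (hZ : Bisim Φ I I' Z) :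
    ∀ R : DLRole CN RN IN, R.inL Φ →
      (∀ x x' y, Z x x' → DLRole.sem I R x y → ∃ y', Z y y' ∧ DLRole.sem I' R x' y') ∧
      (∀ x x' y', Z x x' → DLRole.sem I' R x' y' → ∃ y, Z y y' ∧ DLRole.sem I R x y)
  | .name r, _ => ⟨hZ.2.2.1 r, hZ.2.2.2.1 r⟩
  | .eps, _ => by
      constructor
      · rintro x x' y hxx' rfl
        exact ⟨x', hxx', rfl⟩
      · rintro x x' y' hxx' rfl
        exact ⟨x, hxx', rfl⟩
  | .comp R S, hR => by
      constructor
      · rintro x x' y hxx' ⟨z, hxz, hzy⟩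
        obtain ⟨z', hZz, hz'⟩ := (role_inv hZ R hR.1).1 x x' z hxx' hxz
        obtain ⟨y', hZy, hy'⟩ := (role_inv hZ S hR.2).1 z z' y hZz hzy
        exact ⟨y', hZy, z', hz', hy'⟩
      · rintro x x' y' hxx' ⟨z', hxz', hz'y'⟩
        obtain ⟨z, hZz, hz⟩ := (role_inv hZ R hR.1).2 x x' z' hxx' hxz'
        obtain ⟨y, hZy, hy⟩ := (role_inv hZ S hR.2).2 z z' y' hZz hz'y'
        exact ⟨y, hZy, z, hz, hy⟩
  | .runion R S, hR => by
      constructor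
      · rintro x x' y hxx' (h | h)
        · obtain ⟨y', hZy, hy'⟩ := (role_inv hZ R hR.1).1 x x' y hxx' h
          exact ⟨y', hZy, Or.inl hy'⟩
        · obtain ⟨y', hZy, hy'⟩ := (role_inv hZ S hR.2).1 x x' y hxx' h
          exact ⟨y', hZy, Or.inr hy'⟩
      · rintro x x' y' hxx' (h | h)
        · obtain ⟨y, hZy, hy⟩ := (role_inv hZ R hR.1).2 x x' y' hxx' h
          exact ⟨y, hZy, Or.inl hy⟩
        · obtain ⟨y, hZy, hy⟩ := (role_inv hZ S hR.2).2 x x' y' hxx' h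
          exact ⟨y, hZy, Or.inr hy⟩
  | .star R, hR => by
      constructor
      · intro x x' y hxx' hxy
        induction hxy with
        | refl => exact ⟨x', hxx', Relation.ReflTransGen.refl⟩
        | tail _ hbc ih =>
            obtain ⟨b', hZb, hb'⟩ := ih
            obtain ⟨y', hZy, hy'⟩ := (role_inv hZ R hR).1 _ b' _ hZb hbc
            exact ⟨y', hZy, hb'.tail hy'⟩
      · intro x x' y' hxx' hxy'
        induction hxy' with
        | refl => exact ⟨x, hxx', Relation.ReflTransGen.refl⟩
        | tail _ hbc ih =>
            obtain ⟨b, hZb, hb⟩ := ih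
            obtain ⟨y, hZy, hy⟩ := (role_inv hZ R hR).2 b _ _ hZb hbc
            exact ⟨y, hZy, hb.tail hy⟩
  | .test C, hC => by
      constructor
      · rintro x x' y hxx' ⟨rfl, hxC⟩
        exact ⟨x', hxx', rfl, (concept_inv hZ C hC x x' hxx').mp hxC⟩
      · rintro x x' y' hxx' ⟨rfl, hx'C⟩
        exact ⟨x, hxx', rfl, (concept_inv hZ C hC x x' hxx').mpr hx'C⟩
  | .inv r, hI => by
      constructor
      · intro x x' y hxx' h
        exact (hZ.2.2.2.2.1 hI).1 r x x' y hxx' h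
      · intro x x' y' hxx' h
        exact (hZ.2.2.2.2.1 hI).2 r x x' y' hxx' h
  | .univ, hU => by
      constructor
      · intro x x' y hxx' _
        obtain ⟨y', hy'⟩ := (hZ.2.2.2.2.2.2.2.2.1 hU).1 y
        exact ⟨y', hy', trivial⟩
      · intro x x' y' hxx' _
        obtain ⟨y, hy⟩ := (hZ.2.2.2.2.2.2.2.2.1 hU).2 y'
        exact ⟨y, hy, trivial⟩
end

end Invariance
/-- For a finitely branching interpretation, `L_Φ`-equivalence is the
largest `L_Φ`-auto-bisimulation. -/
theorem lequiv_is_largest_autobisim {CN RN IN D : Type} (Φ : DLFeat)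
    (I : Interp CN RN IN D) (hfb : FinBranch Φ I) :
    Bisim Φ I I (LEquiv Φ I I) ∧
      ∀ Z : D → D → Prop, Bisim Φ I I Z → ∀ x y, Z x y → LEquiv Φ I I x y := by
  constructor
  · refine ⟨fun a => lequiv_refl _, ?_, ?_, ?_, ?_, ?_, ?_, ?_, ?_, ?_⟩
    · intro A x x' h
      exact h (.atom A) (by simp [DLConcept.inL])
    · intro r x x' y h hr
      exact hm_forth hfb h (b := false) (fun h' => absurd h' (by simp)) hr
    · intro r x x' y' h hr
      obtain ⟨y, hy, hr'⟩ :=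
        hm_forth hfb (lequiv_symm h) (b := false) (fun h' => absurd h' (by simp)) hr
      exact ⟨y, lequiv_symm hy, hr'⟩
    · intro hI
      constructor
      · intro r x x' y h hr
        exact hm_forth hfb h (b := true) (fun _ => hI) hr
      · intro r x x' y' h hr
        obtain ⟨y, hy, hr'⟩ := hm_forth hfb (lequiv_symm h) (b := true) (fun _ => hI) hr
        exact ⟨y, lequiv_symm hy, hr'⟩
    · intro hO a x x' h
      have := h (.nom a) (by simpa [DLConcept.inL])
      simpa [DLConcept.sem] using this
    · intro hQ r x x' h
      exact hm_equiv hfb hQ (b := false) (fun h' => absurd h' (by simp)) h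
    · intro hQ hI r x x' h
      exact hm_equiv hfb hQ (b := true) (fun _ => hI) h
    · intro _
      exact ⟨fun x => ⟨x, lequiv_refl x⟩, fun x' => ⟨x', lequiv_refl x'⟩⟩
    · intro hS r x x' h
      exact h (.exSelf r) (by simpa [DLConcept.inL])
  · intro Z hZ x y hxy C hC
    exact concept_inv hZ C hC x y hxy
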